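/- In an MVR chain graph G viewed as a maximal ancestral graph, for any unshielded triple (X_i, X_j, X_k) (X_i and X_j adjacent, X_j and X_k adjacent, X_i and X_k not adjacent), either X_j belongs to every set S ⊆ V \ {X_i, X_k} that m-separates X_i and X_k, or X_j belongs to none of them. Moreover, X_j is in none of them iff X_j is a collider on the path X_i — X_j — X_k (both edges have arrowheads at X_j). -/

import Mathlib

universe u

structure MixedGraph (V : Type u) where
  directed : V → V → Prop
  bidirected : V → V → Prop
  bidirected_symm : ∀ u v, bidirected u v → bidirected v u

namespace MixedGraph

variable {V : Type u}

/-- A partially directed cycle: `n ≥ 3` distinct vertices arranged cyclically,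
each consecutive pair joined by `vᵢ → vᵢ₊₁` or `vᵢ ↔ vᵢ₊₁`, with at least one
directed edge. -/
def HasPartiallyDirectedCycle (G : MixedGraph V) : Prop :=
  ∃ (n : ℕ) (f : ZMod n → V), 3 ≤ n ∧ Function.Injective f ∧
    (∀ i, G.directed (f i) (f (i + 1)) ∨ G.bidirected (f i) (f (i + 1))) ∧
    ∃ j, G.directed (f j) (f (j + 1))

/-- A directed cycle: as above but with every edge directed. -/
def HasDirectedCycle (G : MixedGraph V) : Prop :=
  ∃ (n : ℕ) (f : ZMod n → V), 3 ≤ n ∧ Function.Injective f ∧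
    ∀ i, G.directed (f i) (f (i + 1))

/-- The edge between `a` and `w` has an arrowhead at `w`. -/
def ArrowAt (G : MixedGraph V) (a w : V) : Prop :=
  G.directed a w ∨ G.bidirected a w

/-- `u` and `v` are adjacent (joined by an edge of any type/orientation). -/
def IsEdge (G : MixedGraph V) (u v : V) : Prop :=
  G.directed u v ∨ G.directed v u ∨ G.bidirected u v

/-- `w` is a collider between its chain-neighbours `a` and `b`. -/
def ColliderTriple (G : MixedGraph V) (a w b : V) : Prop :=
  G.ArrowAt a w ∧ G.ArrowAt b w

/-- `x` and `y` are collider connected: joined by a chain on which every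
non-endpoint vertex is a collider. -/
def ColliderConnected (G : MixedGraph V) (x y : V) : Prop :=
  ∃ p : List V, p.Nodup ∧ p.head? = some x ∧ p.getLast? = some y ∧
    2 ≤ p.length ∧ p.Chain' G.IsEdge ∧
    ∀ k a w b, p[k]? = some a → p[k+1]? = some w → p[k+2]? = some b →
      G.ColliderTriple a w b

/-- `u` is an ancestor of `v` (with the convention that `v ∈ An(v)`):
reachability by a directed path. -/
def Ancestor (G : MixedGraph V) (u v : V) : Prop :=
  Relation.ReflTransGen G.directed u v

/-- `An(Z)`: `Z` together with all ancestors of elements of `Z`. -/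
def An (G : MixedGraph V) (Z : Set V) : Set V :=
  {u | ∃ z ∈ Z, G.Ancestor u z}

/-- The vertex `w` at (interior) position `k` of the chain `p` is a collider. -/
def ColliderAt (G : MixedGraph V) (p : List V) (k : ℕ) (w : V) : Prop :=
  ∃ a b, p[k-1]? = some a ∧ p[k]? = some w ∧ p[k+1]? = some b ∧
    G.ColliderTriple a w b

/-- The chain `p` m-connects `α` and `β` given `Z`: every noncollider on it is
outside `Z` and every collider is in `An(Z)`. -/
def MConnecting (G : MixedGraph V) (Z : Set V) (α β : V) (p : List V) : Prop :=
  p.Nodup ∧ p.head? = some α ∧ p.getLast? = some β ∧ 2 ≤ p.length ∧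
  p.Chain' G.IsEdge ∧
  ∀ k w, 0 < k → k + 1 < p.length → p[k]? = some w →
    (G.ColliderAt p k w → w ∈ G.An Z) ∧ (¬ G.ColliderAt p k w → w ∉ Z)

/-- `X` and `Y` are m-separated given `Z`. -/
def MSep (G : MixedGraph V) (X Y Z : Set V) : Prop :=
  ∀ α ∈ X, ∀ β ∈ Y, ∀ p : List V, ¬ G.MConnecting Z α β p

/-- The induced subgraph of `G` on the vertex set `A`. -/
def induce (G : MixedGraph V) (A : Set V) : MixedGraph V where
  directed u v := G.directed u v ∧ u ∈ A ∧ v ∈ A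
  bidirected u v := G.bidirected u v ∧ u ∈ A ∧ v ∈ A
  bidirected_symm := fun u v h => ⟨G.bidirected_symm u v h.1, h.2.2, h.2.1⟩

/-- The augmented graph `G^a`: `c` and `d` adjacent iff collider connected. -/
def Aug (G : MixedGraph V) (c d : V) : Prop := G.ColliderConnected c d

/-- Separation in an undirected graph (given as a relation `R`): every path
from `X` to `Y` meets `Z`. -/
def UndirSep (R : V → V → Prop) (X Y Z : Set V) : Prop :=
  ∀ x ∈ X, ∀ y ∈ Y, ∀ p : List V, p.Nodup → p.head? = some x →
    p.getLast? = some y → p.Chain' R → ∃ w ∈ Z, w ∈ p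

/-- Connectivity by a path of bidirected edges (chain-component relation). -/
def BidirConn (G : MixedGraph V) : V → V → Prop :=
  Relation.ReflTransGen G.bidirected

end MixedGraph

section MVRAux

open MixedGraph

variable {V : Type u}

/-- Extract a duplicate-free chain witnessing a `ReflTransGen`. -/
theorem MixedGraph.exists_nodup_chain {R : V → V → Prop} {b a : V}
    (h : Relation.ReflTransGen R b a) :
    ∃ l : List V, l.Nodup ∧ l.Chain' R ∧ l.head? = some b ∧ l.getLast? = some a := by
  induction h using Relation.ReflTransGen.head_induction_on with
  | refl => exact ⟨[a], by simp, List.isChain_singleton _, rfl, rfl⟩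
  | @head x c hxc hca ih =>
    obtain ⟨l, hnd, hch, hhd, hlast⟩ := ih
    by_cases hx : x ∈ l
    · obtain ⟨s, t, rfl⟩ := List.append_of_mem hx
      refine ⟨x :: t, ((List.suffix_append s (x :: t)).sublist).nodup hnd,
        (List.isChain_append.mp hch).2.1, rfl, ?_⟩
      rw [← hlast, List.getLast?_append_of_ne_nil _ (by simp)]
    · refine ⟨x :: l, List.nodup_cons.mpr ⟨hx, hnd⟩, ?_, rfl, ?_⟩
      · refine List.isChain_cons.mpr ⟨?_, hch⟩
        intro y hy
        rw [hhd, Option.mem_some_iff] at hy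
        subst hy; exact hxc
      · cases l with
        | nil => simp at hhd
        | cons c' l' => rw [List.getLast?_cons_cons]; exact hlast

/-- A duplicate-free cyclic arrangement of forward edges with at least one
directed edge yields a partially directed cycle. -/
theorem MixedGraph.cycle_of_list (G : MixedGraph V) (l : List V) (hnd : l.Nodup)
    (h3 : 3 ≤ l.length) (hch : l.Chain' G.ArrowAt)
    {a b : V} (hhd : l.head? = some b) (hlast : l.getLast? = some a)
    (hd : G.directed a b) : G.HasPartiallyDirectedCycle := by
  have hpos : 0 < l.length := by omega
  haveI : NeZero l.length := ⟨by omega⟩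
  have hone : (1 : ZMod l.length).val = 1 := by
    rw [ZMod.val_one_eq_one_mod, Nat.mod_eq_of_lt (by omega)]
  have hb0 : l[0]'(by omega) = b := by
    have := List.head?_eq_getElem? (l := l)
    rw [hhd, List.getElem?_eq_getElem (by omega : 0 < l.length)] at this
    exact (Option.some.inj this).symm
  have hal : l[l.length - 1]'(by omega) = a := by
    have := List.getLast?_eq_getElem? (l := l)
    rw [hlast, List.getElem?_eq_getElem (by omega : l.length - 1 < l.length)] at this
    exact (Option.some.inj this).symm
  refine ⟨l.length, fun i => l[i.val]'(ZMod.val_lt i), h3, ?_, ?_, ?_⟩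
  · intro i j hij
    have : i.val = j.val := by
      have h1 := List.nodup_iff_injective_getElem.mp hnd
      have := h1 (a₁ := ⟨i.val, ZMod.val_lt i⟩) (a₂ := ⟨j.val, ZMod.val_lt j⟩) hij
      exact Fin.mk.inj_iff.mp this
    exact ZMod.val_injective _ this
  · intro i
    dsimp only
    have hadd : (i + 1).val = (i.val + 1) % l.length := by
      rw [ZMod.val_add, hone]
    by_cases hlt : i.val + 1 < l.length
    · have hv : (i + 1).val = i.val + 1 := by rw [hadd, Nat.mod_eq_of_lt hlt]
      have hR : G.ArrowAt (l[i.val]'(ZMod.val_lt i)) (l[i.val + 1]'hlt) := by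
        have := List.isChain_iff_getElem.mp hch i.val (by omega)
        simpa [List.get_eq_getElem] using this
      have : (l[(i+1).val]'(ZMod.val_lt _)) = l[i.val + 1]'hlt := by
        congr 1
      rw [this]
      exact hR
    · have hv : (i + 1).val = 0 := by
        have := ZMod.val_lt i
        have : i.val + 1 = l.length := by omega
        rw [hadd, this, Nat.mod_self]
      have h1 : (l[i.val]'(ZMod.val_lt i)) = a := by
        have hiv : i.val = l.length - 1 := by have := ZMod.val_lt i; omega
        rw [← hal]; congr 1
      have h2 : (l[(i+1).val]'(ZMod.val_lt _)) = b := by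
        rw [← hb0]; congr 1
      rw [h1, h2]; exact Or.inl hd
  · refine ⟨((l.length - 1 : ℕ) : ZMod l.length), ?_⟩
    have hjv : ((l.length - 1 : ℕ) : ZMod l.length).val = l.length - 1 := by
      rw [ZMod.val_natCast, Nat.mod_eq_of_lt (by omega)]
    have hjv1 : (((l.length - 1 : ℕ) : ZMod l.length) + 1).val = 0 := by
      rw [ZMod.val_add, hjv, hone]
      have : l.length - 1 + 1 = l.length := by omega
      rw [this, Nat.mod_self]
    have h1 : (l[((l.length - 1 : ℕ) : ZMod l.length).val]'(ZMod.val_lt _)) = a := by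
      rw [← hal]; congr 1
    have h2 : (l[(((l.length - 1 : ℕ) : ZMod l.length) + 1).val]'(ZMod.val_lt _)) = b := by
      rw [← hb0]; congr 1
    have hgoal : G.directed (l[((l.length - 1 : ℕ) : ZMod l.length).val]'(ZMod.val_lt _))
        (l[(((l.length - 1 : ℕ) : ZMod l.length) + 1).val]'(ZMod.val_lt _)) := by
      rw [h1, h2]; exact hd
    exact hgoal

/-- KEY: there is no strictly directed edge `a → b` (with no arrowhead back at
`a`) together with a forward walk from `b` back to `a`. -/
theorem MixedGraph.key (G : MixedGraph V) (hcg : ¬ G.HasPartiallyDirectedCycle) {a b : V}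
    (hd : G.directed a b) (hpure : ¬ G.ArrowAt b a)
    (hr : Relation.ReflTransGen G.ArrowAt b a) : False := by
  rcases eq_or_ne b a with rfl | hne
  · exact hpure (Or.inl hd)
  obtain ⟨l, hnd, hch, hhd, hlast⟩ := MixedGraph.exists_nodup_chain hr
  have hlen : 2 ≤ l.length := by
    match l, hhd, hlast with
    | [x], hhd, hlast =>
      exact absurd (by
        have h1 : x = b := by simpa using hhd
        have h2 : x = a := by simpa using hlast
        rw [← h1, h2] : b = a) hne
    | (x :: y :: t), _, _ => simp
  rcases Nat.lt_or_ge l.length 3 with h2 | h3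
  · have hl2 : l.length = 2 := by omega
    match l, hl2, hhd, hlast, hch with
    | [x, y], _, hhd, hlast, hch =>
      have hx : x = b := by simpa using hhd
      have hy : y = a := by simpa using hlast
      subst hx; subst hy
      exact hpure (List.isChain_cons_cons.mp hch).1
  · exact hcg (G.cycle_of_list l hnd h3 hch hhd hlast hd)

end MVRAux

section MVRSep

variable {V : Type u}

/-- Strict directed edge: a directed edge with no arrowhead back. -/
def MixedGraph.PureD (G : MixedGraph V) (u v : V) : Prop :=
  G.directed u v ∧ ¬ G.ArrowAt v u

/-- The separating set: strict-directed ancestors of `{xi, xk}`, minus the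
endpoints themselves. -/
def MixedGraph.SepSet (G : MixedGraph V) (xi xk : V) : Set V :=
  {v | v ≠ xi ∧ v ≠ xk ∧
    (Relation.ReflTransGen G.PureD v xi ∨ Relation.ReflTransGen G.PureD v xk)}

theorem MixedGraph.sep_main (G : MixedGraph V) (hcg : ¬ G.HasPartiallyDirectedCycle)
    {xi xk : V} (hik : ¬ G.IsEdge xi xk) :
    G.MSep {xi} {xk} (G.SepSet xi xk) := by
  classical
  have hRanc : ∀ {x y : V}, G.Ancestor x y → Relation.ReflTransGen G.ArrowAt x y :=
    fun h => Relation.ReflTransGen.mono (fun _ _ hd => Or.inl hd) _ _ h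
  have hRpure : ∀ {x y : V}, Relation.ReflTransGen G.PureD x y →
      Relation.ReflTransGen G.ArrowAt x y :=
    fun h => Relation.ReflTransGen.mono (fun _ _ hd => Or.inl hd.1) _ _ h
  have hFIN : ∀ s e : V, s ≠ e → Relation.ReflTransGen G.PureD s e →
      Relation.ReflTransGen G.ArrowAt e s → False := by
    intro s e hne hp hr
    rcases Relation.ReflTransGen.cases_head hp with h | ⟨q, hq, hqe⟩
    · exact hne h
    · exact G.key hcg hq.1 hq.2 ((hRpure hqe).trans hr)
  have hpureOf : ∀ u v : V, G.IsEdge u v → ¬ G.ArrowAt u v → G.PureD v u := by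
    intro u v he hna
    rcases he with h | h | h
    · exact absurd (Or.inl h) hna
    · exact ⟨h, hna⟩
    · exact absurd (Or.inr h) hna
  have hesymm : ∀ u v : V, G.IsEdge u v → G.IsEdge v u := by
    intro u v h; rcases h with h | h | h
    · exact Or.inr (Or.inl h)
    · exact Or.inl h
    · exact Or.inr (Or.inr (G.bidirected_symm _ _ h))
  intro α hα β hβ p hp
  obtain rfl := (Set.mem_singleton_iff.mp hα).symm
  obtain rfl := (Set.mem_singleton_iff.mp hβ).symm
  obtain ⟨hnd, hhd, hlast, hlen, hch, hint⟩ := hp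
  set n := p.length with hn
  obtain ⟨w, hwa⟩ : ∃ w : ℕ → V, ∀ j (h : j < n), w j = p[j]'h :=
    ⟨fun j => p.getD j xi, fun j h => List.getD_eq_getElem p xi h⟩
  have hw : ∀ j, j < n → p[j]? = some (w j) := by
    intro j hj
    rw [List.getElem?_eq_getElem hj, hwa j hj]
  have hw0 : w 0 = xi := by
    have h0 := hhd
    rw [List.head?_eq_getElem?, hw 0 (by omega)] at h0
    exact Option.some.inj h0
  have hwl : w (n - 1) = xk := by
    have h0 := hlast
    rw [List.getLast?_eq_getElem?, hw (n - 1) (by omega)] at h0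
    exact Option.some.inj h0
  have hnodupW : ∀ i j, i < n → j < n → w i = w j → i = j := by
    intro i j hi hj hij
    rw [hwa i hi, hwa j hj] at hij
    exact (List.Nodup.getElem_inj_iff hnd).mp hij
  have hedgeW : ∀ j, j + 1 < n → G.IsEdge (w j) (w (j + 1)) := by
    intro j hj
    have h := List.isChain_iff_getElem.mp hch j (by omega)
    rw [hwa j (by omega), hwa (j + 1) hj]
    simpa [List.get_eq_getElem] using h
  have hCT : ∀ k, 0 < k → k + 1 < n →
      ((G.ColliderTriple (w (k - 1)) (w k) (w (k + 1)) →
          ∃ s ∈ G.SepSet xi xk, G.Ancestor (w k) s) ∧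
       (¬ G.ColliderTriple (w (k - 1)) (w k) (w (k + 1)) →
          w k ∉ G.SepSet xi xk)) := by
    intro k hk0 hkn
    have h := hint k (w k) hk0 hkn (hw k (by omega))
    constructor
    · intro hct
      exact h.1 ⟨w (k - 1), w (k + 1), hw (k - 1) (by omega), hw k (by omega),
        hw (k + 1) hkn, hct⟩
    · intro hnct
      refine h.2 ?_
      rintro ⟨a, b, ha, hwk, hb, hctr⟩
      rw [hw (k - 1) (by omega)] at ha
      rw [hw (k + 1) hkn] at hb
      rw [← Option.some.inj ha, ← Option.some.inj hb] at hctr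
      exact hnct hctr
  have hn3 : 3 ≤ n := by
    by_contra h
    have h2 : n = 2 := by omega
    have he := hedgeW 0 (by omega)
    rw [hw0] at he
    have e : w 1 = xk := by rw [show (1 : ℕ) = n - 1 from by omega]; exact hwl
    rw [e] at he
    exact hik he
  have hneW : ∀ k, 0 < k → k + 1 < n → w k ≠ xi ∧ w k ≠ xk := by
    intro k hk0 hkn
    constructor
    · intro h; rw [← hw0] at h
      have := hnodupW k 0 (by omega) (by omega) h; omega
    · intro h; rw [← hwl] at h
      have := hnodupW k (n - 1) (by omega) (by omega) h; omega
  have hDOWN : ∀ j, 0 < j → j + 1 < n → G.PureD (w j) (w (j - 1)) →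
      (∀ i, 0 < i → i ≤ j → ¬ G.ColliderTriple (w (i - 1)) (w i) (w (i + 1))) →
      False := by
    intro j
    induction j using Nat.strong_induction_on with
    | _ j ih =>
      intro hj0 hjn hpure hnc
      rcases Nat.lt_or_ge j 2 with h1 | h2
      · have hj1 : j = 1 := by omega
        subst hj1
        have hmem : w 1 ∈ G.SepSet xi xk := by
          refine ⟨(hneW 1 (by omega) (by omega)).1, (hneW 1 (by omega) (by omega)).2,
            Or.inl (Relation.ReflTransGen.single ?_)⟩
          rw [← hw0]
          exact hpure
        exact (hCT 1 (by omega) (by omega)).2 (hnc 1 (by omega) le_rfl) hmem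
      · have hnc1 : ¬ G.ColliderTriple (w (j - 2)) (w (j - 1)) (w j) := by
          have h := hnc (j - 1) (by omega) (by omega)
          rwa [show j - 1 - 1 = j - 2 from by omega, show j - 1 + 1 = j from by omega] at h
        have hA : G.ArrowAt (w j) (w (j - 1)) := Or.inl hpure.1
        have hnA : ¬ G.ArrowAt (w (j - 2)) (w (j - 1)) := fun h => hnc1 ⟨h, hA⟩
        have hedge : G.IsEdge (w (j - 2)) (w (j - 1)) := by
          have h := hedgeW (j - 2) (by omega)
          rwa [show j - 2 + 1 = j - 1 from by omega] at h
        refine ih (j - 1) (by omega) (by omega) (by omega) ?_ ?_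
        · have h := hpureOf _ _ hedge hnA
          rwa [show j - 1 - 1 = j - 2 from by omega]
        · intro i hi0 hij; exact hnc i hi0 (by omega)
  have hUP : ∀ d j, n - j ≤ d → 0 < j → j + 1 < n → G.PureD (w j) (w (j + 1)) →
      (∀ i, j ≤ i → i + 1 < n → ¬ G.ColliderTriple (w (i - 1)) (w i) (w (i + 1))) →
      False := by
    intro d
    induction d with
    | zero => intro j hd hj0 hjn _ _; omega
    | succ d ihd =>
      intro j hd hj0 hjn hpure hnc
      by_cases hend : j + 2 = n
      · have hx : w (j + 1) = xk := by
          rw [show j + 1 = n - 1 from by omega]; exact hwl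
        have hmem : w j ∈ G.SepSet xi xk := by
          refine ⟨(hneW j hj0 hjn).1, (hneW j hj0 hjn).2,
            Or.inr (Relation.ReflTransGen.single ?_)⟩
          rw [← hx]
          exact hpure
        exact (hCT j hj0 hjn).2 (hnc j le_rfl hjn) hmem
      · have hj2 : j + 2 < n := by omega
        have hnc1 : ¬ G.ColliderTriple (w j) (w (j + 1)) (w (j + 2)) := by
          have h := hnc (j + 1) (by omega) (by omega)
          rwa [show j + 1 - 1 = j from by omega, show j + 1 + 1 = j + 2 from by omega] at h
        have hA : G.ArrowAt (w j) (w (j + 1)) := Or.inl hpure.1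
        have hnA : ¬ G.ArrowAt (w (j + 2)) (w (j + 1)) := fun h => hnc1 ⟨hA, h⟩
        have hedge : G.IsEdge (w (j + 1)) (w (j + 2)) := by
          have h := hedgeW (j + 1) (by omega)
          rwa [show j + 1 + 1 = j + 2 from by omega] at h
        have hp2 : G.PureD (w (j + 1)) (w (j + 2)) :=
          hpureOf _ _ (hesymm _ _ hedge) hnA
        exact ihd (j + 1) (by omega) (by omega) (by omega) hp2
          (fun i hi h2 => hnc i (by omega) h2)
  by_cases hex : ∃ k, 0 < k ∧ k + 1 < n ∧
      G.ColliderTriple (w (k - 1)) (w k) (w (k + 1))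
  · obtain ⟨k0, hk0⟩ := hex
    set P : ℕ → Prop := fun k => 0 < k ∧ k + 1 < n ∧
      G.ColliderTriple (w (k - 1)) (w k) (w (k + 1)) with hP
    have hexP : ∃ k, P k := ⟨k0, hk0⟩
    have hPt : P (Nat.find hexP) := Nat.find_spec hexP
    set t := Nat.find hexP with ht
    have htmin : ∀ m, m < t → ¬ P m := fun m hm => Nat.find_min hexP hm
    set u := Nat.findGreatest P (n - 2) with hu
    have hPu : P u := Nat.findGreatest_spec (m := k0) (by omega) hk0
    have humax : ∀ m, u < m → m ≤ n - 2 → ¬ P m :=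
      fun m h1 h2 => Nat.findGreatest_is_greatest h1 h2
    have hpstep : ∀ j, 0 < j → j < t → G.PureD (w j) (w (j + 1)) := by
      intro j hj0 hjt
      have hjn : j + 1 < n := by have := hPt.2.1; omega
      have hnct : ¬ G.ColliderTriple (w (j - 1)) (w j) (w (j + 1)) :=
        fun hct => htmin j hjt ⟨hj0, hjn, hct⟩
      by_cases hA : G.ArrowAt (w (j - 1)) (w j)
      · have hnB : ¬ G.ArrowAt (w (j + 1)) (w j) := fun h => hnct ⟨hA, h⟩
        exact hpureOf _ _ (hesymm _ _ (hedgeW j hjn)) hnB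
      · have hedge : G.IsEdge (w (j - 1)) (w j) := by
          have h := hedgeW (j - 1) (by omega)
          rwa [show j - 1 + 1 = j from by omega] at h
        exact (hDOWN j hj0 hjn (hpureOf _ _ hedge hA)
          (fun i h1 h2 hct => htmin i (by omega) ⟨h1, by omega, hct⟩)).elim
    have hfirst : G.ArrowAt (w 0) (w 1) := by
      by_contra h01
      rcases Nat.eq_or_lt_of_le (show 1 ≤ t from hPt.1) with h | h
      · have hct := hPt.2.2
        rw [← h] at hct
        exact h01 hct.1
      · exact hDOWN 1 (by omega) (by omega)
          (hpureOf _ _ (hedgeW 0 (by omega)) h01)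
          (fun i h1 h2 hct => htmin i (by omega) ⟨h1, by omega, hct⟩)
    have hRL : ∀ j, 0 < j → j ≤ t → Relation.ReflTransGen G.ArrowAt xi (w j) := by
      intro j
      induction j with
      | zero => omega
      | succ j ihj =>
        intro _ hle
        rcases Nat.eq_zero_or_pos j with rfl | hj0
        · rw [← hw0]; exact Relation.ReflTransGen.single hfirst
        · exact (ihj hj0 (by omega)).tail (Or.inl (hpstep j hj0 (by omega)).1)
    have hqstep : ∀ j, u < j → j + 1 < n → G.PureD (w j) (w (j - 1)) := by
      intro j hij hjn
      have hj0 : 0 < j := by have := hPu.1; omega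
      have hnct : ¬ G.ColliderTriple (w (j - 1)) (w j) (w (j + 1)) :=
        fun hct => humax j hij (by omega) ⟨hj0, hjn, hct⟩
      by_cases hB : G.ArrowAt (w (j + 1)) (w j)
      · have hnA : ¬ G.ArrowAt (w (j - 1)) (w j) := fun h => hnct ⟨h, hB⟩
        have hedge : G.IsEdge (w (j - 1)) (w j) := by
          have h := hedgeW (j - 1) (by omega)
          rwa [show j - 1 + 1 = j from by omega] at h
        exact hpureOf _ _ hedge hnA
      · exact (hUP (n - j) j le_rfl hj0 hjn
          (hpureOf _ _ (hesymm _ _ (hedgeW j hjn)) hB)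
          (fun i h1 h2 hct => humax i (by omega) (by omega) ⟨by omega, h2, hct⟩)).elim
    have hlastarrow : G.ArrowAt (w (n - 1)) (w (n - 2)) := by
      by_contra hL
      have hedge : G.IsEdge (w (n - 2)) (w (n - 1)) := by
        have h := hedgeW (n - 2) (by omega)
        rwa [show n - 2 + 1 = n - 1 from by omega] at h
      have hpure : G.PureD (w (n - 2)) (w (n - 1)) :=
        hpureOf _ _ (hesymm _ _ hedge) hL
      rcases Nat.eq_or_lt_of_le (show u ≤ n - 2 from Nat.findGreatest_le _) with he | hlt2
      · have hct := hPu.2.2.2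
        rw [he, show n - 2 + 1 = n - 1 from by omega] at hct
        exact hL hct
      · refine hUP (n - (n - 2)) (n - 2) le_rfl (by omega) (by omega)
          (by rw [show n - 2 + 1 = n - 1 from by omega]; exact hpure)
          (fun i h1 h2 hct => humax i (by omega) (by omega) ⟨by omega, h2, hct⟩)
    have hRR : ∀ d j, u ≤ j → j + d = n - 2 →
        Relation.ReflTransGen G.ArrowAt xk (w j) := by
      intro d
      induction d with
      | zero =>
        intro j huj hj
        have hj' : j = n - 2 := by omega
        subst hj'
        rw [← hwl]
        exact Relation.ReflTransGen.single hlastarrow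
      | succ d ihd =>
        intro j huj hj
        refine (ihd (j + 1) (by omega) (by omega)).tail ?_
        have hp := hqstep (j + 1) (by omega) (by omega)
        rw [show j + 1 - 1 = j from by omega] at hp
        exact Or.inl hp.1
    have hRLt : Relation.ReflTransGen G.ArrowAt xi (w t) := hRL t hPt.1 le_rfl
    have hRRu : Relation.ReflTransGen G.ArrowAt xk (w u) :=
      hRR (n - 2 - u) u le_rfl (by have := Nat.findGreatest_le (P := P) (n - 2); omega)
    obtain ⟨s, hsS, hanc⟩ := (hCT t hPt.1 hPt.2.1).1 hPt.2.2
    obtain ⟨s', hs'S, hanc'⟩ := (hCT u hPu.1 hPu.2.1).1 hPu.2.2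
    have hA1 : Relation.ReflTransGen G.ArrowAt xi s := hRLt.trans (hRanc hanc)
    have hA2 : Relation.ReflTransGen G.ArrowAt xk s' := hRRu.trans (hRanc hanc')
    obtain ⟨hsxi, hsxk, hscase⟩ := hsS
    obtain ⟨hs'xi, hs'xk, hs'case⟩ := hs'S
    rcases hscase with hsi | hsk
    · exact hFIN s xi hsxi hsi hA1
    · rcases hs'case with hs'i | hs'k
      · exact hFIN s xk hsxk hsk (hA2.trans ((hRpure hs'i).trans hA1))
      · exact hFIN s' xk hs'xk hs'k hA2
  · have hnc : ∀ i, 0 < i → i + 1 < n →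
        ¬ G.ColliderTriple (w (i - 1)) (w i) (w (i + 1)) :=
      fun i h1 h2 hct => hex ⟨i, h1, h2, hct⟩
    by_cases h01 : G.ArrowAt (w 0) (w 1)
    · have hn1 : ¬ G.ArrowAt (w 2) (w 1) := by
        intro h
        have hc := hnc 1 (by omega) (by omega)
        rw [show (1 : ℕ) - 1 = 0 from rfl] at hc
        exact hc ⟨h01, h⟩
      exact hUP (n - 1) 1 (by omega) (by omega) (by omega)
        (hpureOf _ _ (hesymm _ _ (hedgeW 1 (by omega))) hn1)
        (fun i hi h2 => hnc i (by omega) h2)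
    · exact hDOWN 1 (by omega) (by omega)
        (hpureOf _ _ (hedgeW 0 (by omega)) h01)
        (fun i h1 h2 => hnc i h1 (by omega))

end MVRSep


section MVRMain

variable {V : Type u}

theorem MixedGraph.triple_mconnecting (G : MixedGraph V) {xi xj xk : V}
    (hij : G.IsEdge xi xj) (hjk : G.IsEdge xj xk) (hik : ¬ G.IsEdge xi xk)
    (hne : xi ≠ xk) (S : Set V)
    (h : (G.ColliderAt [xi, xj, xk] 1 xj → xj ∈ G.An S) ∧
         (¬ G.ColliderAt [xi, xj, xk] 1 xj → xj ∉ S)) :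
    G.MConnecting S xi xk [xi, xj, xk] := by
  have hij_ne : xi ≠ xj := fun h => hik (by rw [h]; exact hjk)
  have hjk_ne : xj ≠ xk := fun h => hik (by rw [← h]; exact hij)
  refine ⟨?_, rfl, rfl, by simp, ?_, ?_⟩
  · simp [List.nodup_cons, hij_ne, hjk_ne, hne]
  · exact List.isChain_cons_cons.mpr ⟨hij, List.isChain_cons_cons.mpr ⟨hjk, List.isChain_singleton _⟩⟩
  · intro k wv hk0 hkn hwk
    have hk1 : k = 1 := by simp at hkn; omega
    subst hk1
    have hwv : xj = wv := by simpa using hwk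
    subst hwv
    exact h

theorem MixedGraph.colliderAt_triple_iff (G : MixedGraph V) (xi xj xk : V) :
    G.ColliderAt [xi, xj, xk] 1 xj ↔ (G.ArrowAt xi xj ∧ G.ArrowAt xk xj) := by
  constructor
  · rintro ⟨a, b, ha, _, hb, hct⟩
    have ha' : xi = a := by simpa using ha
    have hb' : xk = b := by simpa using hb
    rw [← ha', ← hb'] at hct
    exact hct
  · intro h
    exact ⟨xi, xk, rfl, rfl, rfl, h⟩

end MVRMain

/-- in an MVR chain graph, for any unshielded triple
`(Xᵢ, Xⱼ, Xₖ)`, either `Xⱼ` is in every m-separating set for `Xᵢ, Xₖ` or in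
none of them; and it is in none of them iff `Xⱼ` is a collider on
`Xᵢ — Xⱼ — Xₖ`. -/
theorem unshielded_triple_unambiguous {V : Type u} (G : MixedGraph V)
    (hcg : ¬ G.HasPartiallyDirectedCycle) (xi xj xk : V)
    (hij : G.IsEdge xi xj) (hjk : G.IsEdge xj xk) (hik : ¬ G.IsEdge xi xk)
    (hne : xi ≠ xk) :
    ((∀ S : Set V, xi ∉ S → xk ∉ S → G.MSep {xi} {xk} S → xj ∈ S) ∨
     (∀ S : Set V, xi ∉ S → xk ∉ S → G.MSep {xi} {xk} S → xj ∉ S)) ∧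
    ((∀ S : Set V, xi ∉ S → xk ∉ S → G.MSep {xi} {xk} S → xj ∉ S) ↔
      (G.ArrowAt xi xj ∧ G.ArrowAt xk xj)) := by
  classical
  have hCB : (G.ArrowAt xi xj ∧ G.ArrowAt xk xj) →
      ∀ S : Set V, xi ∉ S → xk ∉ S → G.MSep {xi} {xk} S → xj ∉ S := by
    intro hC S _ _ hsep hjS
    refine hsep xi rfl xk rfl [xi, xj, xk]
      (G.triple_mconnecting hij hjk hik hne S ⟨?_, ?_⟩)
    · intro _; exact ⟨xj, hjS, Relation.ReflTransGen.refl⟩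
    · intro hnca; exact absurd ((G.colliderAt_triple_iff xi xj xk).mpr hC) hnca
  have hNC : ¬ (G.ArrowAt xi xj ∧ G.ArrowAt xk xj) →
      ∀ S : Set V, xi ∉ S → xk ∉ S → G.MSep {xi} {xk} S → xj ∈ S := by
    intro hnC S _ _ hsep
    by_contra hjS
    refine hsep xi rfl xk rfl [xi, xj, xk]
      (G.triple_mconnecting hij hjk hik hne S ⟨?_, ?_⟩)
    · intro hca; exact absurd ((G.colliderAt_triple_iff xi xj xk).mp hca) hnC
    · intro _; exact hjS
  have hexS : ∃ S : Set V, xi ∉ S ∧ xk ∉ S ∧ G.MSep {xi} {xk} S :=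
    ⟨G.SepSet xi xk, fun h => h.1 rfl, fun h => h.2.1 rfl, G.sep_main hcg hik⟩
  constructor
  · by_cases hC : G.ArrowAt xi xj ∧ G.ArrowAt xk xj
    · exact Or.inr (hCB hC)
    · exact Or.inl (hNC hC)
  · constructor
    · intro hB
      by_contra hnC
      obtain ⟨S, h1, h2, h3⟩ := hexS
      exact (hB S h1 h2 h3) (hNC hnC S h1 h2 h3)
    · exact hCB
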